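/- For all x in (0, 2π) and t in [0,1], t·x − sin(t·x) ≥ t³·(x − sin(x)). -/

import Mathlib

open Real

lemma lemA : ∀ u : ℝ, 0 ≤ u → u ≤ Real.pi → u * Real.cos u ≤ Real.sin u := by
  intro u hu0 hupi
  have key : MonotoneOn (fun v : ℝ => Real.sin v - v * Real.cos v) (Set.Icc 0 Real.pi) := by
    apply monotoneOn_of_deriv_nonneg (convex_Icc 0 Real.pi)
    · exact (Real.continuous_sin.sub (continuous_id.mul Real.continuous_cos)).continuousOn
    · intro v hv
      exact ((Real.differentiable_sin.sub (differentiable_id.mul Real.differentiable_cos)) v).differentiableWithinAt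
    · intro v hv
      have hd : HasDerivAt (fun v : ℝ => Real.sin v - v * Real.cos v) (v * Real.sin v) v := by
        have h1 := Real.hasDerivAt_sin v
        have h2 : HasDerivAt (fun v : ℝ => v * Real.cos v) (1 * Real.cos v + v * (-Real.sin v)) v :=
          (hasDerivAt_id v).mul (Real.hasDerivAt_cos v)
        have := h1.sub h2
        exact this.congr_deriv (by ring)
      rw [hd.deriv]
      rw [interior_Icc] at hv
      exact mul_nonneg (le_of_lt hv.1) (Real.sin_nonneg_of_nonneg_of_le_pi (le_of_lt hv.1) (le_of_lt hv.2))
  have h0 : (0:ℝ) ∈ Set.Icc (0:ℝ) Real.pi := ⟨le_refl 0, Real.pi_pos.le⟩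
  have hu : u ∈ Set.Icc (0:ℝ) Real.pi := ⟨hu0, hupi⟩
  have := key h0 hu hu0
  simp at this
  linarith

lemma lemB : ∀ x : ℝ, 0 ≤ x → x ≤ 2 * Real.pi →
    x * (1 - Real.cos x) - 3 * (x - Real.sin x) ≤ 0 := by
  intro x hx0 hx2pi
  have key : AntitoneOn (fun y : ℝ => y * (1 - Real.cos y) - 3 * (y - Real.sin y))
      (Set.Icc 0 (2 * Real.pi)) := by
    apply antitoneOn_of_deriv_nonpos (convex_Icc 0 (2 * Real.pi))
    · fun_prop
    · intro y hy
      exact (((differentiable_id.mul ((differentiable_const 1).sub Real.differentiable_cos)).sub ((differentiable_id.sub Real.differentiable_sin).const_mul 3)) y).differentiableWithinAt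
    · intro y hy
      rw [interior_Icc] at hy
      have hd : HasDerivAt (fun y : ℝ => y * (1 - Real.cos y) - 3 * (y - Real.sin y))
          (y * Real.sin y + 2 * Real.cos y - 2) y := by
        have h1 : HasDerivAt (fun y : ℝ => y * (1 - Real.cos y))
            (1 * (1 - Real.cos y) + y * (0 - (-Real.sin y))) y :=
          (hasDerivAt_id y).mul ((hasDerivAt_const y 1).sub (Real.hasDerivAt_cos y))
        have h2 : HasDerivAt (fun y : ℝ => 3 * (y - Real.sin y))
            (3 * (1 - Real.cos y)) y :=
          ((hasDerivAt_id y).sub (Real.hasDerivAt_sin y)).const_mul 3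
        have := h1.sub h2
        exact this.congr_deriv (by ring)
      rw [hd.deriv]
      -- half angle
      set u := y / 2 with hu
      have hy2 : y = 2 * u := by rw [hu]; ring
      have hsin : Real.sin y = 2 * Real.sin u * Real.cos u := by
        rw [hy2, Real.sin_two_mul]
      have hcos : Real.cos y = 1 - 2 * Real.sin u ^ 2 := by
        rw [hy2, Real.cos_two_mul]
        have := Real.sin_sq_add_cos_sq u
        linarith
      have hu0 : 0 ≤ u := by rw [hu]; linarith [hy.1]
      have hupi : u ≤ Real.pi := by rw [hu]; linarith [hy.2]
      have hA := lemA u hu0 hupi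
      have hsnn : 0 ≤ Real.sin u := Real.sin_nonneg_of_nonneg_of_le_pi hu0 hupi
      have : y * Real.sin y + 2 * Real.cos y - 2 = 4 * Real.sin u * (u * Real.cos u - Real.sin u) := by
        rw [hsin, hcos, hy2]; ring
      rw [this]
      have : u * Real.cos u - Real.sin u ≤ 0 := by linarith
      have h4s : 0 ≤ 4 * Real.sin u := by linarith
      exact mul_nonpos_of_nonneg_of_nonpos h4s this
  have h0 : (0:ℝ) ∈ Set.Icc (0:ℝ) (2 * Real.pi) := ⟨le_refl 0, by positivity⟩
  have hx : x ∈ Set.Icc (0:ℝ) (2 * Real.pi) := ⟨hx0, hx2pi⟩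
  have := key h0 hx hx0
  simp at this
  linarith

lemma lemC : ∀ a b : ℝ, 0 < a → a ≤ b → b ≤ 2 * Real.pi →
    (b - Real.sin b) * a ^ 3 ≤ (a - Real.sin a) * b ^ 3 := by
  intro a b ha0 hab hb2pi
  have hb0 : 0 < b := lt_of_lt_of_le ha0 hab
  have key : AntitoneOn (fun y : ℝ => (y - Real.sin y) / y ^ 3) (Set.Icc a b) := by
    apply antitoneOn_of_deriv_nonpos (convex_Icc a b)
    · apply ContinuousOn.div
      · fun_prop
      · fun_prop
      · intro y hy
        have : 0 < y := lt_of_lt_of_le ha0 hy.1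
        positivity
    · intro y hy
      rw [interior_Icc] at hy
      have hy0 : 0 < y := lt_of_lt_of_le ha0 hy.1.le
      apply DifferentiableAt.differentiableWithinAt
      exact ((differentiable_id.sub Real.differentiable_sin) y).div ((differentiable_pow 3) y) (by positivity)
    · intro y hy
      rw [interior_Icc] at hy
      have hy0 : 0 < y := lt_of_lt_of_le ha0 hy.1.le
      have hd : HasDerivAt (fun y : ℝ => (y - Real.sin y) / y ^ 3)
          (((1 - Real.cos y) * y ^ 3 - (y - Real.sin y) * (3 * y ^ 2)) / (y ^ 3) ^ 2) y := by
        have h1 : HasDerivAt (fun y : ℝ => y - Real.sin y) (1 - Real.cos y) y :=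
          (hasDerivAt_id y).sub (Real.hasDerivAt_sin y)
        have h2 : HasDerivAt (fun y : ℝ => y ^ 3) (3 * y ^ 2) y := by
          simpa using hasDerivAt_pow 3 y
        exact h1.div h2 (by positivity)
      rw [hd.deriv]
      apply div_nonpos_of_nonpos_of_nonneg _ (by positivity)
      have hB := lemB y hy0.le (le_trans hy.2.le hb2pi)
      have heq : (1 - Real.cos y) * y ^ 3 - (y - Real.sin y) * (3 * y ^ 2)
          = y ^ 2 * (y * (1 - Real.cos y) - 3 * (y - Real.sin y)) := by ring
      rw [heq]
      exact mul_nonpos_of_nonneg_of_nonpos (by positivity) hB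
  have hma : a ∈ Set.Icc a b := ⟨le_refl a, hab⟩
  have hmb : b ∈ Set.Icc a b := ⟨hab, le_refl b⟩
  have h := key hma hmb hab
  simp only at h
  rw [div_le_div_iff₀ (by positivity) (by positivity)] at h
  linarith

theorem stmt_3 (x t : ℝ) (hx0 : 0 < x) (hx2pi : x < 2 * Real.pi)
    (ht0 : 0 ≤ t) (ht1 : t ≤ 1) :
    t * x - Real.sin (t * x) ≥ t ^ 3 * (x - Real.sin x) := by
  rcases eq_or_lt_of_le ht0 with h0 | h0
  · simp [← h0]
  · have ha0 : 0 < t * x := mul_pos h0 hx0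
    have hab : t * x ≤ x := by nlinarith
    have h := lemC (t * x) x ha0 hab hx2pi.le
    have hx3 : (0:ℝ) < x ^ 3 := by positivity
    have hexp : (t * x) ^ 3 = t ^ 3 * x ^ 3 := by ring
    rw [hexp] at h
    nlinarith [pow_pos h0 3]
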